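/- Let d ≥ 2 be an integer, 0 < Λ ≤ 1, and a = arcsin Λ. Then inf_{χ ∈ Γ_{ς,ς}} ∫_{[0,π/2]²} (1 + κ_Λ(φ + ψ)) dχ(φ, ψ) ≥ 2Λ [ cos(a/2) · b_d/(2 b_{d−1}) − ((d − 1)/d) sin(a/2) − (a/2)(a/2 − sin(a/2)) ]. -/

import Mathlib

open MeasureTheory Real Set
open scoped ENNReal NNReal

noncomputable section

/-- `b d` is the volume of the unit ball in `ℝ^d`. -/
def ballVol (d : ℕ) : ℝ := Real.pi ^ ((d : ℝ) / 2) / Real.Gamma ((d : ℝ) / 2 + 1)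

/-- `f_{θ,Λ}(η) = cos(θ + 2η) + 2Λ sin η`. -/
def fFun (θ Λ η : ℝ) : ℝ := Real.cos (θ + 2 * η) + 2 * Λ * Real.sin η

/-- `κ_Λ(θ) = inf_{η ∈ [0,(π−θ)/2]} f_{θ,Λ}(η)`. -/
def kappaFun (Λ θ : ℝ) : ℝ := sInf (fFun θ Λ '' Set.Icc 0 ((Real.pi - θ) / 2))

/-- The measure `ς_d` on `[0, π/2]` with density `(d−1) sin^{d−2}φ cos φ`. -/
def sigmaMeasure (d : ℕ) : Measure ℝ :=
  (volume.restrict (Set.Icc 0 (Real.pi / 2))).withDensity fun φ =>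
    ENNReal.ofReal (((d : ℝ) - 1) * Real.sin φ ^ (d - 2) * Real.cos φ)

/-- `Γ_{ς,ς}`: measures on the square whose marginals equal `ς_d`. -/
def GammaSigmaSigma (d : ℕ) : Set (Measure (ℝ × ℝ)) :=
  {χ | χ.map Prod.fst = sigmaMeasure d ∧ χ.map Prod.snd = sigmaMeasure d}

end

-- core algebraic inequality
lemma algB (sa ca s c : ℝ) (hs1 : sa^2 + ca^2 = 1) (hs2 : s^2 + c^2 = 1)
    (hsa : 0 ≤ sa) (hca : 0 ≤ ca) (hc : 0 ≤ c) (hss : sa ≤ s) (hs : s ≤ 1) :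
    s^2 - 2*sa*ca^2*s + 2*sa^2*ca*c ≥ 0 := by
  rcases le_or_gt (2*sa*ca^2) s with h | h
  · have hs0 : 0 ≤ s := le_trans hsa hss
    nlinarith [mul_nonneg hs0 (sub_nonneg.mpr h), mul_nonneg (mul_nonneg (sq_nonneg sa) hca) hc]
  · -- s < 2 sa ca²; show c ≥ ca³/2
    have hx : (0:ℝ) ≤ ca^2 := sq_nonneg ca
    have hx1 : ca^2 ≤ 1 := by nlinarith [sq_nonneg sa]
    have hpoly : 4 - 16*(ca^2)^2 + 15*(ca^2)^3 ≥ 0 := by nlinarith [sq_nonneg (ca^2 - 32/45), sq_nonneg ca, hx1]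
    have hc2 : c^2 ≥ (ca^3/2)^2 := by nlinarith [sq_nonneg sa, sq_nonneg s]
    have hcge : c ≥ ca^3/2 := by
      nlinarith [sq_nonneg (c - ca^3/2), pow_nonneg hca 3]
    nlinarith [sq_nonneg (s - sa*ca^2), mul_nonneg (sq_nonneg sa) hca]

lemma keyB (a v : ℝ) (ha0 : 0 ≤ a) (ha2 : a ≤ π/2) (hv1 : a/2 ≤ v) (hv2 : v ≤ π/2) :
    sin a * sin (v - a/2) ≤ sin v ^ 2 := by
  have h2 : sin a = 2 * sin (a/2) * cos (a/2) := by
    rw [show a = 2*(a/2) by ring, sin_two_mul]; ring_nf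
  have hsub : sin (v - a/2) = sin v * cos (a/2) - cos v * sin (a/2) := sin_sub v (a/2)
  have hpy1 : sin (a/2)^2 + cos (a/2)^2 = 1 := sin_sq_add_cos_sq _
  have hpy2 : sin v ^2 + cos v ^2 = 1 := sin_sq_add_cos_sq _
  have hv0 : 0 ≤ v := le_trans (by linarith) hv1
  have hsa : 0 ≤ sin (a/2) := sin_nonneg_of_nonneg_of_le_pi (by linarith) (by linarith [pi_pos])
  have hca : 0 ≤ cos (a/2) := cos_nonneg_of_mem_Icc ⟨by linarith [pi_pos], by linarith⟩
  have hcv : 0 ≤ cos v := cos_nonneg_of_mem_Icc ⟨by linarith [pi_pos], hv2⟩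
  have hmono : sin (a/2) ≤ sin v := by
    apply Real.strictMonoOn_sin.monotoneOn ⟨by linarith [pi_pos], by linarith⟩ ⟨by linarith [pi_pos], hv2⟩ hv1
  have hsv1 : sin v ≤ 1 := sin_le_one v
  have := algB (sin (a/2)) (cos (a/2)) (sin v) (cos v) hpy1 hpy2 hsa hca hcv hmono hsv1
  rw [h2, hsub]; nlinarith
lemma keyA (a t η : ℝ) (ha0 : 0 ≤ a) (ha2 : a ≤ π/2) (ht0 : 0 ≤ t) (ht2 : t ≤ π/2)
    (hη0 : 0 ≤ η) (hη2 : η ≤ π/2 - t) :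
    sin a * cos (t + a/2) ≤ cos (t+η)^2 + sin a * sin η := by
  set x := t + η with hx
  set u := π/4 - x/2 with hu
  have hpi := pi_pos
  have hxt : t ≤ x := by simp [hx]; linarith
  have hx2 : x ≤ π/2 := by simp [hx]; linarith
  have hu0 : 0 ≤ u := by simp [hu]; linarith
  have hu4 : u ≤ π/4 := by simp [hu]; linarith
  have hΛ : 0 ≤ sin a := sin_nonneg_of_nonneg_of_le_pi ha0 (by linarith)
  -- identity
  have hid : cos (t + a/2) - sin (x - t) = 2 * sin (u + t + a/4) * sin (u - a/4) := by
    have h1 : sin (x - t) = cos (π/2 - (x - t)) := (cos_pi_div_two_sub _).symm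
    rw [h1, cos_sub_cos]
    have e1 : (t + a/2 + (π/2 - (x - t)))/2 = u + t + a/4 := by rw [hu]; ring
    have e2 : (t + a/2 - (π/2 - (x - t)))/2 = -(u - a/4) := by rw [hu]; ring
    rw [e1, e2, sin_neg]; ring
  have hsη : sin (x - t) = sin η := by rw [hx]; ring_nf
  rcases le_or_gt u (a/4) with hc | hc
  · -- RHS of identity ≤ 0
    have h1 : sin (u - a/4) ≤ 0 := sin_nonpos_of_nonpos_of_neg_pi_le (by linarith) (by linarith)
    have h2 : 0 ≤ sin (u + t + a/4) := sin_nonneg_of_nonneg_of_le_pi (by linarith) (by linarith)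
    have h3 : cos (t + a/2) - sin (x - t) ≤ 0 := by
      rw [hid]; nlinarith
    have := sq_nonneg (cos (t+η))
    rw [hsη] at h3
    nlinarith
  · have hua : 0 ≤ u - a/4 := by linarith
    have hub : u + t + a/4 ≤ π/2 - (u - a/4) := by
      have : t + 2*u = π/2 - η := by rw [hu, hx]; ring
      linarith
    have h2 : sin (u + t + a/4) ≤ cos (u - a/4) := by
      rw [← sin_pi_div_two_sub]
      apply Real.strictMonoOn_sin.monotoneOn ⟨by linarith, by linarith⟩ ⟨by linarith, by linarith⟩ hub
    have h3 : 0 ≤ sin (u - a/4) := sin_nonneg_of_nonneg_of_le_pi hua (by linarith)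
    have h4 : 2 * sin (u + t + a/4) * sin (u - a/4) ≤ sin (2*u - a/2) := by
      have : sin (2*u - a/2) = 2 * sin (u - a/4) * cos (u - a/4) := by
        rw [show 2*u - a/2 = 2*(u - a/4) by ring, sin_two_mul]
      rw [this]; nlinarith
    have h5 : sin a * sin (2*u - a/2) ≤ sin (2*u) ^ 2 :=
      keyB a (2*u) ha0 ha2 (by linarith) (by linarith)
    have h6 : cos x = sin (2*u) := by
      rw [show x = π/2 - 2*u by rw [hu]; ring, cos_pi_div_two_sub]
    have h7 : cos (t + a/2) ≤ sin η + sin (2*u - a/2) := by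
      have := hid; rw [hsη] at this; nlinarith
    calc sin a * cos (t + a/2) ≤ sin a * (sin η + sin (2*u - a/2)) := by
          apply mul_le_mul_of_nonneg_left h7 hΛ
      _ ≤ cos (t+η)^2 + sin a * sin η := by
          have h8 : cos (t+η) = sin (2*u) := h6
          rw [mul_add, h8]; linarith
lemma fFun_lb (θ Λ η : ℝ) (hΛ : Λ ≤ 1) (hΛ0 : 0 ≤ Λ) : (-3:ℝ) ≤ fFun θ Λ η := by
  unfold fFun
  nlinarith [neg_one_le_cos (θ + 2*η), neg_one_le_sin η, sin_le_one η]

lemma fFun_lip (θ Λ x y : ℝ) (hΛ : Λ ≤ 1) (hΛ0 : 0 ≤ Λ) :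
    |fFun θ Λ x - fFun θ Λ y| ≤ 4 * |x - y| := by
  have hcs : ∀ p r : ℝ, |Real.cos p - Real.cos r| ≤ |p - r| := by
    intro p r
    rw [Real.cos_sub_cos]
    calc |-2 * Real.sin ((p+r)/2) * Real.sin ((p-r)/2)|
        = 2 * |Real.sin ((p+r)/2)| * |Real.sin ((p-r)/2)| := by
          rw [abs_mul, abs_mul]; norm_num
      _ ≤ 2 * 1 * |(p-r)/2| := by
          apply mul_le_mul (by nlinarith [Real.abs_sin_le_one ((p+r)/2)]) (Real.abs_sin_le_abs)
            (abs_nonneg _) (by norm_num)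
      _ = |p - r| := by rw [abs_div, abs_two]; ring
  have h1 : |Real.cos (θ+2*x) - Real.cos (θ+2*y)| ≤ |(θ+2*x) - (θ+2*y)| := hcs _ _
  have h2 : |Real.sin x - Real.sin y| ≤ |x - y| := by
    have := hcs (π/2 - x) (π/2 - y)
    rw [Real.cos_pi_div_two_sub, Real.cos_pi_div_two_sub] at this
    calc |Real.sin x - Real.sin y| ≤ |(π/2 - x) - (π/2 - y)| := this
      _ = |y - x| := by ring_nf
      _ = |x - y| := abs_sub_comm y x
  have e : fFun θ Λ x - fFun θ Λ y
      = (Real.cos (θ+2*x) - Real.cos (θ+2*y)) + 2*Λ*(Real.sin x - Real.sin y) := by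
    unfold fFun; ring
  rw [e]
  calc |(Real.cos (θ+2*x) - Real.cos (θ+2*y)) + 2*Λ*(Real.sin x - Real.sin y)|
      ≤ |Real.cos (θ+2*x) - Real.cos (θ+2*y)| + |2*Λ*(Real.sin x - Real.sin y)| := abs_add_le _ _
    _ ≤ |(θ+2*x) - (θ+2*y)| + 2*Λ*|Real.sin x - Real.sin y| := by
        rw [abs_mul, abs_of_nonneg (by linarith : (0:ℝ) ≤ 2*Λ)]
        have : 0 ≤ 2*Λ := by linarith
        nlinarith [abs_nonneg (Real.sin x - Real.sin y)]
    _ ≤ 4 * |x - y| := by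
        have e2 : (θ+2*x) - (θ+2*y) = 2*(x - y) := by ring
        rw [e2, abs_mul, abs_two]
        have := abs_nonneg (x - y)
        nlinarith [abs_nonneg (Real.sin x - Real.sin y), h2]

lemma kappa_bddBelow (θ Λ : ℝ) (hΛ : Λ ≤ 1) (hΛ0 : 0 ≤ Λ) :
    BddBelow (fFun θ Λ '' Set.Icc 0 ((π - θ) / 2)) :=
  ⟨-3, by rintro y ⟨η, -, rfl⟩; exact fFun_lb θ Λ η hΛ hΛ0⟩

lemma kappa_eq_iInf (Λ θ : ℝ) (hθ : θ ≤ π) (hΛ : Λ ≤ 1) (hΛ0 : 0 ≤ Λ) :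
    kappaFun Λ θ = ⨅ q : Set.Icc (0:ℚ) 1, fFun θ Λ ((q:ℝ) * ((π - θ)/2)) := by
  set M := (π - θ)/2 with hM
  have hM0 : 0 ≤ M := by rw [hM]; linarith
  have hbdd : BddBelow (Set.range fun q : Set.Icc (0:ℚ) 1 => fFun θ Λ ((q:ℝ) * M)) :=
    ⟨-3, by rintro y ⟨q, rfl⟩; exact fFun_lb θ Λ _ hΛ hΛ0⟩
  apply le_antisymm
  · apply le_ciInf
    intro q
    apply csInf_le (kappa_bddBelow θ Λ hΛ hΛ0)
    refine ⟨(q:ℝ) * M, ⟨mul_nonneg (by exact_mod_cast q.2.1) hM0, ?_⟩, rfl⟩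
    calc (q:ℝ) * M ≤ 1 * M :=
          mul_le_mul_of_nonneg_right (by exact_mod_cast q.2.2) hM0
      _ = M := one_mul M
  · apply le_csInf
    · exact ⟨fFun θ Λ 0, ⟨0, ⟨le_refl 0, hM0⟩, rfl⟩⟩
    rintro y ⟨η, ⟨hη0, hη2⟩, rfl⟩
    rcases eq_or_lt_of_le hM0 with hM0' | hM0'
    · have hη : η = 0 := le_antisymm (hη2.trans (le_of_eq hM0'.symm)) hη0
      subst hη
      have h := ciInf_le hbdd (⟨0, by norm_num⟩ : Set.Icc (0:ℚ) 1)
      simpa using h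
    · apply le_of_forall_pos_le_add
      intro ε hε
      set δ : ℝ := min (ε / (4*(M+1))) (1/4) with hδ
      have hδ0 : 0 < δ := by
        apply lt_min _ (by norm_num)
        positivity
      have hr01 : η / M ∈ Set.Icc (0:ℝ) 1 :=
        ⟨div_nonneg hη0 hM0, (div_le_one hM0').mpr hη2⟩
      -- choose rational q in [0,1] with |q - η/M| ≤ δ
      obtain ⟨q, hq01, hqd⟩ : ∃ q : ℚ, (q:ℝ) ∈ Set.Icc (0:ℝ) 1 ∧ |(q:ℝ) - η/M| ≤ δ := by
        rcases le_or_gt (η/M) (1/2) with hc | hc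
        · obtain ⟨q, hq1, hq2⟩ := exists_rat_btwn (show η/M < η/M + δ by linarith)
          exact ⟨q, ⟨by linarith [hr01.1], by have := hδ0; have h14 : δ ≤ 1/4 := min_le_right _ _; linarith⟩,
            by rw [abs_le]; constructor <;> linarith⟩
        · obtain ⟨q, hq1, hq2⟩ := exists_rat_btwn (show η/M - δ < η/M by linarith)
          exact ⟨q, ⟨by have h14 : δ ≤ 1/4 := min_le_right _ _; linarith, by linarith [hr01.2]⟩,
            by rw [abs_le]; constructor <;> linarith⟩
      have hqQ : q ∈ Set.Icc (0:ℚ) 1 :=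
        ⟨by exact_mod_cast hq01.1, by exact_mod_cast hq01.2⟩
      have h1 : (⨅ q : Set.Icc (0:ℚ) 1, fFun θ Λ ((q:ℝ) * M)) ≤ fFun θ Λ ((q:ℝ) * M) :=
        ciInf_le hbdd ⟨q, hqQ⟩
      have h2 : |fFun θ Λ ((q:ℝ)*M) - fFun θ Λ η| ≤ 4 * |(q:ℝ)*M - η| :=
        fFun_lip θ Λ _ _ hΛ hΛ0
      have h3 : |(q:ℝ)*M - η| ≤ M * δ := by
        have e : (q:ℝ)*M - η = M * ((q:ℝ) - η/M) := by rw [mul_sub, mul_div_cancel₀ _ hM0'.ne']; ring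
        rw [e, abs_mul, abs_of_nonneg hM0]
        exact mul_le_mul_of_nonneg_left hqd hM0
      have h4 : 4 * (M * δ) ≤ ε := by
        have hδ1 : δ ≤ ε / (4*(M+1)) := min_le_left _ _
        have : 4 * (M * δ) ≤ 4 * (M * (ε / (4*(M+1)))) := by
          apply mul_le_mul_of_nonneg_left _ (by norm_num)
          exact mul_le_mul_of_nonneg_left hδ1 hM0
        have e : 4 * (M * (ε / (4*(M+1)))) = ε * (M/(M+1)) := by field_simp
        have : ε * (M/(M+1)) ≤ ε := by
          have : M/(M+1) ≤ 1 := by rw [div_le_one (by linarith)]; linarith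
          nlinarith
        linarith
      have := abs_le.mp h2
      linarith

lemma kappa_measurable (Λ : ℝ) (hΛ : Λ ≤ 1) (hΛ0 : 0 ≤ Λ) : Measurable (kappaFun Λ) := by
  have heq : kappaFun Λ = fun θ =>
      if θ ≤ π then ⨅ q : Set.Icc (0:ℚ) 1, fFun θ Λ ((q:ℝ) * ((π - θ)/2)) else 0 := by
    funext θ
    split_ifs with h
    · exact kappa_eq_iInf Λ θ h hΛ hΛ0
    · unfold kappaFun
      rw [Set.Icc_eq_empty (by push_neg at h ⊢; linarith), Set.image_empty, Real.sInf_empty]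
  rw [heq]
  apply Measurable.ite (measurableSet_le measurable_id measurable_const)
  · apply Measurable.iInf
    intro q
    unfold fFun
    fun_prop
  · exact measurable_const
lemma kappa_ge (a φ ψ : ℝ) (ha0 : 0 < a) (ha2 : a ≤ π/2)
    (hφ : φ ∈ Set.Icc 0 (π/2)) (hψ : ψ ∈ Set.Icc 0 (π/2)) :
    sin a * (cos (φ + a/2) + cos (ψ + a/2)) - 1 ≤ kappaFun (sin a) (φ + ψ) := by
  obtain ⟨hφ0, hφ2⟩ := hφ
  obtain ⟨hψ0, hψ2⟩ := hψ
  have hpi := pi_pos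
  set θ := φ + ψ with hθ
  have hθ0 : 0 ≤ θ := by rw [hθ]; linarith
  have hθπ : θ ≤ π := by rw [hθ]; linarith
  have hΛ0 : 0 ≤ sin a := sin_nonneg_of_nonneg_of_le_pi ha0.le (by linarith)
  apply le_csInf
  · exact ⟨fFun θ (sin a) 0, ⟨0, ⟨le_refl 0, by linarith⟩, rfl⟩⟩
  rintro y ⟨η, ⟨hη0, hη2⟩, rfl⟩
  have hid : fFun θ (sin a) η + 1 = 2 * (cos (θ/2 + η)^2 + sin a * sin η) := by
    unfold fFun
    have : cos (θ + 2*η) = 2 * cos (θ/2 + η)^2 - 1 := by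
      rw [show θ + 2*η = 2*(θ/2 + η) by ring, cos_two_mul]
    rw [this]; ring
  have hA := keyA a (θ/2) η ha0.le ha2 (by linarith) (by linarith) hη0 (by linarith)
  have hsum : cos (φ + a/2) + cos (ψ + a/2) = 2 * cos (θ/2 + a/2) * cos ((φ - ψ)/2) := by
    rw [cos_add_cos]
    congr 2
    · rw [hθ]; ring
    · ring
  have hδ0 : 0 ≤ cos ((φ - ψ)/2) := cos_nonneg_of_mem_Icc ⟨by linarith, by linarith⟩
  have hδ1 : cos ((φ - ψ)/2) ≤ 1 := cos_le_one _
  rcases le_or_gt 0 (cos (θ/2 + a/2)) with h | h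
  · have key : cos (φ + a/2) + cos (ψ + a/2) ≤ 2 * cos (θ/2 + a/2) := by
      rw [hsum]; nlinarith
    nlinarith [sq_nonneg (cos (θ/2 + η))]
  · have hsη : 0 ≤ sin η := sin_nonneg_of_nonneg_of_le_pi hη0 (by linarith)
    have hnn : 0 ≤ fFun θ (sin a) η + 1 := by
      rw [hid]; nlinarith [sq_nonneg (cos (θ/2 + η))]
    have hsum0 : cos (φ + a/2) + cos (ψ + a/2) ≤ 0 := by
      rw [hsum]; nlinarith
    nlinarith

lemma kappa_abs_le (Λ θ : ℝ) (hΛ : Λ ≤ 1) (hΛ0 : 0 ≤ Λ) : |kappaFun Λ θ| ≤ 3 := by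
  unfold kappaFun
  rcases le_or_gt θ π with h | h
  · have hne : (fFun θ Λ '' Set.Icc 0 ((π - θ)/2)).Nonempty :=
      ⟨fFun θ Λ 0, ⟨0, ⟨le_refl 0, by linarith⟩, rfl⟩⟩
    have hbdd : BddBelow (fFun θ Λ '' Set.Icc 0 ((π - θ)/2)) :=
      ⟨-3, by rintro y ⟨η, -, rfl⟩; exact fFun_lb θ Λ η hΛ hΛ0⟩
    rw [abs_le]
    constructor
    · have := le_csInf hne (fun y hy => by
        obtain ⟨η, -, rfl⟩ := hy; exact fFun_lb θ Λ η hΛ hΛ0)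
      linarith
    · have h1 : sInf (fFun θ Λ '' Set.Icc 0 ((π - θ)/2)) ≤ fFun θ Λ 0 :=
        csInf_le hbdd ⟨0, ⟨le_refl 0, by linarith⟩, rfl⟩
      have h2 : fFun θ Λ 0 ≤ 3 := by
        unfold fFun
        nlinarith [cos_le_one (θ + 2*0), neg_one_le_sin (0:ℝ), sin_le_one (0:ℝ)]
      linarith
  · rw [Set.Icc_eq_empty (by intro hc; linarith), Set.image_empty, Real.sInf_empty]
    norm_num
-- S(n) : sine power integral in terms of Gamma
lemma sin_pow_integral (n : ℕ) :
    ∫ x in (0:ℝ)..(π/2), sin x ^ n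
      = Real.sqrt π * Real.Gamma (((n:ℝ)+1)/2) / (2 * Real.Gamma ((n:ℝ)/2 + 1)) := by
  induction n using Nat.twoStepInduction with
  | zero =>
    simp only [Nat.cast_zero, pow_zero]
    rw [integral_one]
    have h1 : ((0:ℝ)+1)/2 = 1/2 := by norm_num
    have h2 : (0:ℝ)/2 + 1 = 1 := by norm_num
    rw [h1, h2, Real.Gamma_one, Real.Gamma_one_half_eq]
    have hss : Real.sqrt π * Real.sqrt π = π := Real.mul_self_sqrt Real.pi_pos.le
    field_simp
    rw [sq, hss]; ring
  | one =>
    simp only [Nat.cast_one, pow_one]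
    rw [integral_sin]
    have h1 : ((1:ℝ)+1)/2 = 1 := by norm_num
    have h2 : (1:ℝ)/2 + 1 = 1/2 + 1 := by norm_num
    rw [h1, h2, Real.Gamma_one, Real.Gamma_add_one (by norm_num : (1:ℝ)/2 ≠ 0),
      Real.Gamma_one_half_eq]
    have hs : Real.sqrt π > 0 := Real.sqrt_pos.mpr Real.pi_pos
    rw [Real.cos_zero, Real.cos_pi_div_two]
    field_simp
    norm_num
  | more n ih _ =>
    have hrec := @integral_sin_pow 0 (π/2) n
    rw [Real.sin_zero, Real.cos_pi_div_two, Real.sin_pi_div_two] at hrec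
    simp only [one_pow, mul_zero, zero_mul, one_mul, zero_pow, sub_zero] at hrec
    have hb : (0:ℝ) ^ (n+1) * 1 = 0 := by norm_num
    rw [hrec, ih]
    have hΓ1 : Real.Gamma (((n:ℝ)+2+1)/2) = (((n:ℝ)+1)/2) * Real.Gamma (((n:ℝ)+1)/2) := by
      rw [show ((n:ℝ)+2+1)/2 = ((n:ℝ)+1)/2 + 1 by ring, Real.Gamma_add_one (by positivity)]
    have hΓ2 : Real.Gamma (((n:ℝ)+2)/2 + 1) = ((n:ℝ)/2 + 1) * Real.Gamma ((n:ℝ)/2 + 1) := by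
      rw [show ((n:ℝ)+2)/2 + 1 = ((n:ℝ)/2 + 1) + 1 by ring, Real.Gamma_add_one (by positivity)]
    have hg1 : Real.Gamma ((n:ℝ)/2 + 1) > 0 := Real.Gamma_pos_of_pos (by positivity)
    have hn2 : ((n:ℝ) + 2) ≠ 0 := by positivity
    push_cast
    rw [hΓ1, hΓ2]
    field_simp
    ring
lemma sin_pow_mul_cos_integral (k : ℕ) :
    ∫ x in (0:ℝ)..(π/2), sin x ^ k * cos x = 1/((k:ℝ)+1) := by
  have h := @integral_sin_pow_mul_cos_pow_odd 0 (π/2) k 0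
  simp only [pow_one, mul_zero, zero_add, pow_zero, mul_one, Real.sin_zero,
    Real.sin_pi_div_two] at h
  rw [h, integral_pow]
  norm_num

lemma sin_pow_mul_cos_sq_integral (m : ℕ) :
    ∫ x in (0:ℝ)..(π/2), sin x ^ m * cos x ^ 2
      = (∫ x in (0:ℝ)..(π/2), sin x ^ m) - ∫ x in (0:ℝ)..(π/2), sin x ^ (m+2) := by
  rw [← intervalIntegral.integral_sub]
  · apply intervalIntegral.integral_congr
    intro x hx
    show Real.sin x ^ m * Real.cos x ^ 2 = Real.sin x ^ m - Real.sin x ^ (m+2)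
    rw [Real.cos_sq']; ring
  · exact (continuous_sin.pow m).intervalIntegrable _ _
  · exact (continuous_sin.pow (m+2)).intervalIntegrable _ _

lemma weighted_cos_sq (m : ℕ) :
    ((m:ℝ)+1) * ∫ x in (0:ℝ)..(π/2), sin x ^ m * cos x ^ 2
      = ballVol (m+2) / (2 * ballVol (m+1)) := by
  have hG1 : 0 < Real.Gamma (((m:ℝ)+1)/2) := Real.Gamma_pos_of_pos (by positivity)
  have hG2 : 0 < Real.Gamma ((m:ℝ)/2 + 1) := Real.Gamma_pos_of_pos (by positivity)
  have hΓ1 : Real.Gamma (((m:ℝ)+2+1)/2) = (((m:ℝ)+1)/2) * Real.Gamma (((m:ℝ)+1)/2) := by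
    rw [show ((m:ℝ)+2+1)/2 = ((m:ℝ)+1)/2 + 1 by ring, Real.Gamma_add_one (by positivity)]
  have hΓ2 : Real.Gamma (((m:ℝ)+2)/2 + 1) = ((m:ℝ)/2 + 1) * Real.Gamma ((m:ℝ)/2 + 1) := by
    rw [show ((m:ℝ)+2)/2 + 1 = ((m:ℝ)/2 + 1) + 1 by ring, Real.Gamma_add_one (by positivity)]
  have hball : ballVol (m+2) / (2 * ballVol (m+1))
      = Real.sqrt π * Real.Gamma (((m:ℝ)+2+1)/2) / (2 * Real.Gamma (((m:ℝ)+2)/2+1)) := by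
    unfold ballVol
    have hΓ3 : 0 < Real.Gamma (((m:ℝ)+2)/2 + 1) := Real.Gamma_pos_of_pos (by positivity)
    have hΓ4 : 0 < Real.Gamma (((m:ℝ)+1)/2 + 1) := Real.Gamma_pos_of_pos (by positivity)
    have hc2 : ((m+2:ℕ):ℝ) = (m:ℝ)+2 := by push_cast; ring
    have hc1 : ((m+1:ℕ):ℝ) = (m:ℝ)+1 := by push_cast; ring
    rw [hc1, hc2]
    have hΓeq : Real.Gamma (((m:ℝ)+1)/2 + 1) = Real.Gamma (((m:ℝ)+2+1)/2) := by
      congr 1; ring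
    have hrpow : Real.pi ^ (((m:ℝ)+2)/2) = Real.pi ^ (((m:ℝ)+1)/2) * Real.sqrt π := by
      rw [Real.sqrt_eq_rpow, ← Real.rpow_add Real.pi_pos]
      congr 1; ring
    have hp : (0:ℝ) < Real.pi ^ (((m:ℝ)+1)/2) := Real.rpow_pos_of_pos Real.pi_pos _
    rw [hrpow, hΓeq]
    field_simp
  rw [hball, sin_pow_mul_cos_sq_integral, sin_pow_integral, sin_pow_integral, hΓ1, hΓ2]
  have hc : ((m+2:ℕ):ℝ) = (m:ℝ)+2 := by push_cast; ring
  rw [hc]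
  rw [hΓ1, hΓ2]
  field_simp
  ring
lemma sigma_density_eq (m : ℕ) :
    sigmaMeasure (m+2) = (volume.restrict (Set.Icc 0 (π/2))).withDensity
      (fun φ => ((((m:ℝ)+1) * Real.sin φ ^ m * Real.cos φ).toNNReal : ℝ≥0∞)) := by
  unfold sigmaMeasure
  congr 1
  funext φ
  have h : (((m+2:ℕ) : ℝ) - 1) * Real.sin φ ^ ((m+2) - 2) * Real.cos φ
      = ((m:ℝ)+1) * Real.sin φ ^ m * Real.cos φ := by
    push_cast [Nat.add_sub_cancel]; ring
  rw [h, ENNReal.ofReal]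

lemma w_nonneg (m : ℕ) {x : ℝ} (hx : x ∈ Set.Icc 0 (π/2)) :
    0 ≤ ((m:ℝ)+1) * Real.sin x ^ m * Real.cos x := by
  have h1 : 0 ≤ Real.sin x := Real.sin_nonneg_of_nonneg_of_le_pi hx.1 (by linarith [hx.2, Real.pi_pos])
  have h2 : 0 ≤ Real.cos x := Real.cos_nonneg_of_mem_Icc ⟨by linarith [hx.1, Real.pi_pos], hx.2⟩
  positivity

lemma sigma_integral (m : ℕ) (g : ℝ → ℝ) :
    ∫ x, g x ∂(sigmaMeasure (m+2))
      = ∫ x in (0:ℝ)..(π/2), (((m:ℝ)+1) * Real.sin x ^ m * Real.cos x) * g x := by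
  have hw : Measurable (fun x => ((m:ℝ)+1) * Real.sin x ^ m * Real.cos x) := by fun_prop
  rw [sigma_density_eq, integral_withDensity_eq_integral_smul hw.real_toNNReal g]
  have hcongr : ∫ x in Set.Icc (0:ℝ) (π/2),
        ((((m:ℝ)+1) * Real.sin x ^ m * Real.cos x).toNNReal : ℝ≥0) • g x
      = ∫ x in Set.Icc (0:ℝ) (π/2), (((m:ℝ)+1) * Real.sin x ^ m * Real.cos x) * g x := by
    apply setIntegral_congr_fun measurableSet_Icc
    intro x hx
    have := w_nonneg m hx
    simp [NNReal.smul_def, Real.coe_toNNReal _ this]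
  rw [hcongr, MeasureTheory.integral_Icc_eq_integral_Ioc,
    ← intervalIntegral.integral_of_le (by positivity : (0:ℝ) ≤ π/2)]

lemma sigma_prob (m : ℕ) : IsProbabilityMeasure (sigmaMeasure (m+2)) := by
  constructor
  rw [sigma_density_eq]
  rw [withDensity_apply _ MeasurableSet.univ, Measure.restrict_univ]
  have hw : Measurable (fun x => ((m:ℝ)+1) * Real.sin x ^ m * Real.cos x) := by fun_prop
  have hint : Integrable (fun x => ((m:ℝ)+1) * Real.sin x ^ m * Real.cos x)
      (volume.restrict (Set.Icc (0:ℝ) (π/2))) := by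
    apply Continuous.integrableOn_Icc
    fun_prop
  have hnn : 0 ≤ᵐ[volume.restrict (Set.Icc (0:ℝ) (π/2))]
      (fun x => ((m:ℝ)+1) * Real.sin x ^ m * Real.cos x) := by
    filter_upwards [ae_restrict_mem measurableSet_Icc] with x hx using w_nonneg m hx
  have hl := MeasureTheory.ofReal_integral_eq_lintegral_ofReal hint hnn
  have hval : ∫ x, ((m:ℝ)+1) * Real.sin x ^ m * Real.cos x
      ∂(volume.restrict (Set.Icc (0:ℝ) (π/2))) = 1 := by
    rw [MeasureTheory.integral_Icc_eq_integral_Ioc,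
      ← intervalIntegral.integral_of_le (by positivity : (0:ℝ) ≤ π/2)]
    have : ∫ x in (0:ℝ)..(π/2), ((m:ℝ)+1) * Real.sin x ^ m * Real.cos x
        = ((m:ℝ)+1) * ∫ x in (0:ℝ)..(π/2), Real.sin x ^ m * Real.cos x := by
      rw [← intervalIntegral.integral_const_mul]
      apply intervalIntegral.integral_congr
      intro x hx; ring
    rw [this, sin_pow_mul_cos_integral]
    field_simp
  have heq : (fun x => ENNReal.ofReal (((m:ℝ)+1) * Real.sin x ^ m * Real.cos x))
      = fun x => ((((m:ℝ)+1) * Real.sin x ^ m * Real.cos x).toNNReal : ℝ≥0∞) := by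
    funext x; rw [ENNReal.ofReal]
  rw [← heq, ← hl, hval, ENNReal.ofReal_one]

lemma sigma_compl (m : ℕ) : sigmaMeasure (m+2) (Set.Icc (0:ℝ) (π/2))ᶜ = 0 := by
  unfold sigmaMeasure
  rw [withDensity_apply _ measurableSet_Icc.compl,
    Measure.restrict_restrict measurableSet_Icc.compl, Set.compl_inter_self,
    Measure.restrict_empty, lintegral_zero_measure]
theorem stmt18 (d : ℕ) (hd : 2 ≤ d) (Λ a : ℝ) (hΛ0 : 0 < Λ) (hΛ1 : Λ ≤ 1)
    (ha : a = Real.arcsin Λ) :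
    sInf {r : ℝ | ∃ χ ∈ GammaSigmaSigma d,
        r = ∫ p, (1 + kappaFun Λ (p.1 + p.2)) ∂χ} ≥
      2 * Λ * (Real.cos (a / 2) * (ballVol d / (2 * ballVol (d - 1))) -
        ((d : ℝ) - 1) / d * Real.sin (a / 2) - a / 2 * (a / 2 - Real.sin (a / 2))) := by
  obtain ⟨m, rfl⟩ : ∃ m, d = m + 2 := ⟨d - 2, by omega⟩
  have hpi := pi_pos
  have hsin : Real.sin a = Λ := by rw [ha]; exact Real.sin_arcsin (by linarith) hΛ1
  have ha0 : 0 < a := by rw [ha]; exact Real.arcsin_pos.mpr hΛ0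
  have ha2 : a ≤ π/2 := by rw [ha]; exact Real.arcsin_le_pi_div_two Λ
  haveI : IsProbabilityMeasure (sigmaMeasure (m+2)) := sigma_prob m
  -- the value of the marginal integral
  set c : ℝ := ∫ x, Real.cos (x + a/2) ∂(sigmaMeasure (m+2)) with hc
  have hcval : c = Real.cos (a/2) * (ballVol (m+2) / (2 * ballVol (m+1)))
      - Real.sin (a/2) * (((m:ℝ)+1)/((m:ℝ)+2)) := by
    rw [hc, sigma_integral m]
    have hint1 : ∫ x in (0:ℝ)..(π/2), (((m:ℝ)+1) * Real.sin x ^ m * Real.cos x) * Real.cos (x + a/2)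
        = Real.cos (a/2) * (((m:ℝ)+1) * ∫ x in (0:ℝ)..(π/2), Real.sin x ^ m * Real.cos x ^ 2)
          - Real.sin (a/2) * (((m:ℝ)+1) * ∫ x in (0:ℝ)..(π/2), Real.sin x ^ (m+1) * Real.cos x) := by
      rw [← intervalIntegral.integral_const_mul, ← intervalIntegral.integral_const_mul,
        ← intervalIntegral.integral_const_mul, ← intervalIntegral.integral_const_mul,
        ← intervalIntegral.integral_sub]
      · apply intervalIntegral.integral_congr
        intro x hx
        show (((m:ℝ)+1) * Real.sin x ^ m * Real.cos x) * Real.cos (x + a/2)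
          = Real.cos (a/2) * (((m:ℝ)+1) * (Real.sin x ^ m * Real.cos x ^ 2))
            - Real.sin (a/2) * (((m:ℝ)+1) * (Real.sin x ^ (m+1) * Real.cos x))
        rw [Real.cos_add, pow_succ]
        ring
      · apply Continuous.intervalIntegrable; fun_prop
      · apply Continuous.intervalIntegrable; fun_prop
    rw [hint1, weighted_cos_sq m, sin_pow_mul_cos_integral (m+1)]
    push_cast
    ring
  -- final bound via pointwise inequality, for every coupling
  have hbound : ∀ r ∈ {r : ℝ | ∃ χ ∈ GammaSigmaSigma (m+2),
      r = ∫ p, (1 + kappaFun Λ (p.1 + p.2)) ∂χ}, 2 * Λ * c ≤ r := by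
    rintro r ⟨χ, ⟨hχ1, hχ2⟩, rfl⟩
    haveI : IsProbabilityMeasure χ := by
      constructor
      have : (χ.map Prod.fst) Set.univ = χ Set.univ := by
        rw [Measure.map_apply measurable_fst MeasurableSet.univ]; rfl
      rw [← this, hχ1]
      exact measure_univ
    have hae : ∀ᵐ p ∂χ, p.1 ∈ Set.Icc (0:ℝ) (π/2) ∧ p.2 ∈ Set.Icc (0:ℝ) (π/2) := by
      have h1 : χ {p : ℝ × ℝ | p.1 ∉ Set.Icc (0:ℝ) (π/2)} = 0 := by
        have : {p : ℝ × ℝ | p.1 ∉ Set.Icc (0:ℝ) (π/2)}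
            = Prod.fst ⁻¹' (Set.Icc (0:ℝ) (π/2))ᶜ := rfl
        rw [this, ← Measure.map_apply measurable_fst measurableSet_Icc.compl, hχ1]
        exact sigma_compl m
      have h2 : χ {p : ℝ × ℝ | p.2 ∉ Set.Icc (0:ℝ) (π/2)} = 0 := by
        have : {p : ℝ × ℝ | p.2 ∉ Set.Icc (0:ℝ) (π/2)}
            = Prod.snd ⁻¹' (Set.Icc (0:ℝ) (π/2))ᶜ := rfl
        rw [this, ← Measure.map_apply measurable_snd measurableSet_Icc.compl, hχ2]
        exact sigma_compl m
      have := measure_union_le (μ := χ) {p : ℝ × ℝ | p.1 ∉ Set.Icc (0:ℝ) (π/2)}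
        {p : ℝ × ℝ | p.2 ∉ Set.Icc (0:ℝ) (π/2)}
      rw [h1, h2] at this
      simp only [add_zero, nonpos_iff_eq_zero] at this
      have h0 : χ ({p : ℝ × ℝ | p.1 ∉ Set.Icc (0:ℝ) (π/2)}
          ∪ {p : ℝ × ℝ | p.2 ∉ Set.Icc (0:ℝ) (π/2)}) = 0 := this
      rw [ae_iff]
      convert h0 using 2
      ext p
      simp only [Set.mem_setOf_eq, Set.mem_union]
      tauto
    -- integrability
    have hmeasH : Measurable (fun p : ℝ × ℝ => 1 + kappaFun Λ (p.1 + p.2)) :=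
      measurable_const.add ((kappa_measurable Λ hΛ1 hΛ0.le).comp (measurable_fst.add measurable_snd))
    have hintH : Integrable (fun p : ℝ × ℝ => 1 + kappaFun Λ (p.1 + p.2)) χ := by
      apply Integrable.mono' (integrable_const (4:ℝ)) hmeasH.aestronglyMeasurable
      filter_upwards with p
      have := kappa_abs_le Λ (p.1 + p.2) hΛ1 hΛ0.le
      rw [abs_le] at this
      rw [Real.norm_eq_abs, abs_le]
      constructor <;> linarith [this.1, this.2]
    have hintG : Integrable (fun p : ℝ × ℝ => Λ * (Real.cos (p.1 + a/2) + Real.cos (p.2 + a/2))) χ := by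
      apply Integrable.mono' (integrable_const (2*Λ))
        (Continuous.aestronglyMeasurable (by fun_prop))
      filter_upwards with p
      have h1 := Real.abs_cos_le_one (p.1 + a/2)
      have h2 := Real.abs_cos_le_one (p.2 + a/2)
      rw [abs_le] at h1 h2
      rw [Real.norm_eq_abs, abs_mul, abs_of_pos hΛ0]
      have : |Real.cos (p.1 + a/2) + Real.cos (p.2 + a/2)| ≤ 2 := by
        rw [abs_le]; constructor <;> linarith [h1.1, h1.2, h2.1, h2.2]
      nlinarith [abs_nonneg (Real.cos (p.1 + a/2) + Real.cos (p.2 + a/2))]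
    -- pointwise a.e. inequality
    have hle : (fun p : ℝ × ℝ => Λ * (Real.cos (p.1 + a/2) + Real.cos (p.2 + a/2)))
        ≤ᵐ[χ] (fun p : ℝ × ℝ => 1 + kappaFun Λ (p.1 + p.2)) := by
      filter_upwards [hae] with p hp
      have := kappa_ge a p.1 p.2 ha0 ha2 hp.1 hp.2
      rw [hsin] at this
      linarith
    have hmono := integral_mono_ae hintG hintH hle
    -- compute the G-integral
    have hG : ∫ p, Λ * (Real.cos (p.1 + a/2) + Real.cos (p.2 + a/2)) ∂χ = 2 * Λ * c := by
      have hsplit : ∫ p, Λ * (Real.cos (p.1 + a/2) + Real.cos (p.2 + a/2)) ∂χ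
          = Λ * ((∫ p, Real.cos (p.1 + a/2) ∂χ) + ∫ p, Real.cos (p.2 + a/2) ∂χ) := by
        rw [integral_const_mul, integral_add]
        · apply Integrable.mono' (integrable_const (1:ℝ))
            (Continuous.aestronglyMeasurable (by fun_prop))
          filter_upwards with p
          rw [Real.norm_eq_abs]; exact Real.abs_cos_le_one _
        · apply Integrable.mono' (integrable_const (1:ℝ))
            (Continuous.aestronglyMeasurable (by fun_prop))
          filter_upwards with p
          rw [Real.norm_eq_abs]; exact Real.abs_cos_le_one _
      have hm1 : ∫ p, Real.cos (p.1 + a/2) ∂χ = c := by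
        rw [hc, ← hχ1, integral_map measurable_fst.aemeasurable
          (Continuous.aestronglyMeasurable (by fun_prop))]
      have hm2 : ∫ p, Real.cos (p.2 + a/2) ∂χ = c := by
        rw [hc, ← hχ2, integral_map measurable_snd.aemeasurable
          (Continuous.aestronglyMeasurable (by fun_prop))]
      rw [hsplit, hm1, hm2]; ring
    rw [hG] at hmono
    exact hmono
  -- nonemptiness
  have hne : {r : ℝ | ∃ χ ∈ GammaSigmaSigma (m+2),
      r = ∫ p, (1 + kappaFun Λ (p.1 + p.2)) ∂χ}.Nonempty := by
    refine ⟨_, (sigmaMeasure (m+2)).prod (sigmaMeasure (m+2)), ⟨?_, ?_⟩, rfl⟩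
    · show ((sigmaMeasure (m+2)).prod (sigmaMeasure (m+2))).fst = sigmaMeasure (m+2)
      exact Measure.fst_prod
    · show ((sigmaMeasure (m+2)).prod (sigmaMeasure (m+2))).snd = sigmaMeasure (m+2)
      exact Measure.snd_prod
  -- conclude
  have hfinal := le_csInf hne hbound
  have htail : 0 ≤ a/2 - Real.sin (a/2) := by
    have := Real.sin_le (by linarith : (0:ℝ) ≤ a/2)
    linarith
  have hrw1 : ((m+2:ℕ):ℝ) = (m:ℝ)+2 := by push_cast; ring
  have hrw2 : (m+2) - 1 = m + 1 := by omega
  calc 2 * Λ * (Real.cos (a / 2) * (ballVol (m+2) / (2 * ballVol ((m+2) - 1))) -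
        (((m+2:ℕ):ℝ) - 1) / ((m+2:ℕ):ℝ) * Real.sin (a / 2) - a / 2 * (a / 2 - Real.sin (a / 2)))
      = 2 * Λ * c - 2 * Λ * (a/2 * (a/2 - Real.sin (a/2))) := by
        rw [hrw2, hcval, hrw1]
        push_cast
        ring
    _ ≤ 2 * Λ * c := by
        have h9 : 0 ≤ a/2 * (a/2 - Real.sin (a/2)) := mul_nonneg (by linarith) htail
        nlinarith
    _ ≤ sInf {r : ℝ | ∃ χ ∈ GammaSigmaSigma (m+2),
          r = ∫ p, (1 + kappaFun Λ (p.1 + p.2)) ∂χ} := hfinal
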